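/- Let G be a finite tree in which every vertex has odd degree. Then every information dominating set of G that does not contain any leaf is a vertex cover of G. -/

import Mathlib

open Classical

/-- A binary opinion profile `μ` on a finite simple graph `G` is valid under the
local majority rule. -/
def IsValidProfile {V : Type*} [Fintype V] (G : SimpleGraph V) (μ : V → Bool) : Prop :=
  ∀ v : V,
    ((G.neighborFinset v).filter fun u => μ u = μ v).card ≥
    ((G.neighborFinset v).filter fun u => μ u ≠ μ v).card

/-- A subset `D` of the vertices is an information dominating set: any two valid
opinion profiles that agree on `D` are equal. -/
def IsIDS {V : Type*} [Fintype V] (G : SimpleGraph V) (D : Set V) : Prop :=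
  ∀ μ ν : V → Bool, IsValidProfile G μ → IsValidProfile G ν →
    (∀ v ∈ D, μ v = ν v) → μ = ν

/-- `C` is a vertex cover: every edge has at least one endpoint in `C`. -/
def IsVertexCover {V : Type*} (G : SimpleGraph V) (C : Set V) : Prop :=
  ∀ ⦃u v : V⦄, G.Adj u v → u ∈ C ∨ v ∈ C

open scoped Classical

namespace IDSAux

variable {V : Type*} {G : SimpleGraph V}

lemma no_triangle (htree : G.IsTree) {a b c : V} (hab : G.Adj a b) (hbc : G.Adj b c)
    (hac : G.Adj a c) : False := by
  have h1 : (SimpleGraph.Walk.cons hac SimpleGraph.Walk.nil : G.Walk a c).IsPath := by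
    simp [SimpleGraph.Walk.isPath_def, hac.ne]
  have h2 : (SimpleGraph.Walk.cons hab (SimpleGraph.Walk.cons hbc SimpleGraph.Walk.nil) :
      G.Walk a c).IsPath := by
    simp [SimpleGraph.Walk.isPath_def, hab.ne, hac.ne, hbc.ne]
  have := (htree.existsUnique_path a c).unique h1 h2
  have hl := congrArg SimpleGraph.Walk.length this
  simp at hl

lemma concat_isPath {a b c : V} {p : G.Walk a b} (hp : p.IsPath) (h : G.Adj b c)
    (hc : c ∉ p.support) : (p.concat h).IsPath := by
  rw [SimpleGraph.Walk.isPath_def, SimpleGraph.Walk.support_concat]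
  simp only [List.concat_eq_append, List.nodup_append]
  refine ⟨hp.support_nodup, List.nodup_singleton _, ?_⟩
  intro x hx y hy hxy
  simp only [List.mem_singleton] at hy
  subst hy
  exact hc (hxy ▸ hx)

lemma getVert_concat' {a b c : V} (p : G.Walk a b) (h : G.Adj b c) {i : ℕ}
    (hi : i ≤ p.length) : (p.concat h).getVert i = p.getVert i := by
  rw [SimpleGraph.Walk.concat_eq_append, SimpleGraph.Walk.getVert_append]
  rcases lt_or_eq_of_le hi with hlt | heq
  · simp [hlt]
  · subst heq
    simp [SimpleGraph.Walk.getVert_length]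

lemma path_dichotomy (htree : G.IsTree) {r x y : V} (hxy : G.Adj x y)
    (P : G.Walk r x) (Q : G.Walk r y) (hP : P.IsPath) (hQ : Q.IsPath) :
    Q = P.concat hxy ∨ P = Q.concat hxy.symm := by
  by_cases hy : y ∈ P.support
  · right
    set P' := P.takeUntil y hy with hP'def
    have hP'path : P'.IsPath := hP.takeUntil hy
    have hxsup : x ∉ P'.support := by
      intro hxP'
      have hspec := P.take_spec hy
      have hnodup := hP.support_nodup
      rw [← hspec, SimpleGraph.Walk.support_append] at hnodup
      rw [List.nodup_append] at hnodup
      have hdisj := hnodup.2.2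
      have hxdrop : x ∈ (P.dropUntil y hy).support := SimpleGraph.Walk.end_mem_support _
      have hcons := (P.dropUntil y hy).support_eq_cons
      rw [hcons] at hxdrop
      rcases List.mem_cons.mp hxdrop with h | h
      · exact hxy.ne' h.symm
      · exact hdisj x hxP' x h rfl
    have hQeq : Q = P' := (htree.existsUnique_path r y).unique hQ hP'path
    have hconc : (P'.concat hxy.symm).IsPath := concat_isPath hP'path hxy.symm hxsup
    have := (htree.existsUnique_path r x).unique hP hconc
    rw [this, hQeq]
  · left
    have hconc : (P.concat hxy).IsPath := concat_isPath hP hxy hy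
    exact (htree.existsUnique_path r y).unique hQ hconc


noncomputable def branch {u : V} (v : V) (p : ∀ x : V, G.Walk u x) (x : V) : V :=
  if (p x).getVert 1 = v then (p x).getVert 2 else (p x).getVert 1

lemma one_le_length {u x : V} (q : G.Walk u x) (hx : x ≠ u) : 1 ≤ q.length := by
  by_contra h
  push_neg at h
  interval_cases hq : q.length
  · exact hx (SimpleGraph.Walk.eq_of_length_eq_zero hq).symm

lemma branch_concat {u v : V} {p : ∀ x : V, G.Walk u x} {x y : V} (hxy : G.Adj x y)
    (hx1 : x ≠ u) (hx2 : x ≠ v) (heq : p y = (p x).concat hxy) :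
    branch v p x = branch v p y := by
  have hlen : 1 ≤ (p x).length := one_le_length _ hx1
  have g1 : (p y).getVert 1 = (p x).getVert 1 := by
    rw [heq]; exact getVert_concat' _ _ hlen
  unfold branch
  rw [g1]
  by_cases h : (p x).getVert 1 = v
  · simp only [h, if_pos rfl]
    have hlen2 : 2 ≤ (p x).length := by
      rcases Nat.lt_or_ge (p x).length 2 with hl | hl
      · exfalso
        have h1 : (p x).length = 1 := by omega
        have := (p x).getVert_length
        rw [h1] at this
        exact hx2 (this ▸ h ▸ rfl)
      · exact hl
    rw [heq, getVert_concat' _ _ hlen2]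
  · simp [h]

lemma branch_adj (htree : G.IsTree) {u v : V} {p : ∀ x : V, G.Walk u x}
    (hp : ∀ x, (p x).IsPath) {x y : V} (hxy : G.Adj x y)
    (hxu : x ≠ u) (hxv : x ≠ v) (hyu : y ≠ u) (hyv : y ≠ v) :
    branch v p x = branch v p y := by
  rcases path_dichotomy htree hxy (p x) (p y) (hp x) (hp y) with h | h
  · exact branch_concat hxy hxu hxv h
  · exact (branch_concat hxy.symm hyu hyv h).symm

lemma branch_seed_u {u v : V} {p : ∀ x : V, G.Walk u x}
    (huniq : ∀ x (q : G.Walk u x), q.IsPath → p x = q) {w : V}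
    (hw : G.Adj u w) (hwv : w ≠ v) : branch v p w = w := by
  have hpw : p w = SimpleGraph.Walk.cons hw SimpleGraph.Walk.nil := by
    apply huniq
    simp [SimpleGraph.Walk.isPath_def, hw.ne]
  unfold branch
  rw [hpw]
  simp [SimpleGraph.Walk.getVert, hwv]

lemma branch_seed_v {u v : V} {p : ∀ x : V, G.Walk u x}
    (huniq : ∀ x (q : G.Walk u x), q.IsPath → p x = q) (huv : G.Adj u v) {w : V}
    (hw : G.Adj v w) (hwu : w ≠ u) : branch v p w = w := by
  have hpw : p w = SimpleGraph.Walk.cons huv (SimpleGraph.Walk.cons hw SimpleGraph.Walk.nil) := by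
    apply huniq
    simp [SimpleGraph.Walk.isPath_def, huv.ne, hw.ne, hwu.symm]
  unfold branch
  rw [hpw]
  simp [SimpleGraph.Walk.getVert]


variable [Fintype V]

/-- The flip set: `u`, `v`, and leaf neighbors of `u` or `v`. -/
def Scond (G : SimpleGraph V) (u v x : V) : Prop :=
  x = u ∨ x = v ∨ (G.degree x = 1 ∧ (G.Adj u x ∨ G.Adj v x))

/-- The profile: value `b` on the flip set, otherwise determined by the branch. -/
noncomputable def prof (G : SimpleGraph V) (u v : V) (p : ∀ x : V, G.Walk u x)
    (A : Finset V) (b : Bool) (x : V) : Bool :=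
  if Scond G u v x then b else decide (branch v p x ∈ A)

lemma prof_of_S {u v : V} {p : ∀ x : V, G.Walk u x} {A : Finset V} {b : Bool} {x : V}
    (h : Scond G u v x) : prof G u v p A b x = b := by
  simp only [prof, if_pos h]

lemma prof_of_not_S {u v : V} {p : ∀ x : V, G.Walk u x} {A : Finset V} {b : Bool} {x : V}
    (h : ¬ Scond G u v x) : prof G u v p A b x = decide (branch v p x ∈ A) := by
  simp only [prof, if_neg h]

lemma half_le {G : SimpleGraph V} {x : V} {f : V → Bool}
    (h : 2 * ((G.neighborFinset x).filter (fun y => f y ≠ f x)).card ≤ G.degree x) :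
    ((G.neighborFinset x).filter (fun y => f y = f x)).card ≥
      ((G.neighborFinset x).filter (fun y => f y ≠ f x)).card := by
  have hpart := Finset.card_filter_add_card_filter_not
    (s := G.neighborFinset x) (p := fun y => f y = f x)
  have hd : (G.neighborFinset x).card = G.degree x := rfl
  simp only [ne_eq] at h ⊢
  omega

lemma prof_valid {G : SimpleGraph V} (htree : G.IsTree) {u v : V} (huv : G.Adj u v)
    (p : ∀ x : V, G.Walk u x) (hp : ∀ x, (p x).IsPath)
    (huniq : ∀ x (q : G.Walk u x), q.IsPath → p x = q)
    {Au Av : Finset V}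
    (hAusub : Au ⊆ (G.neighborFinset u).filter (fun w => w ≠ v ∧ G.degree w ≠ 1))
    (hAucard : Au.card =
      ((G.neighborFinset u).filter (fun w => w ≠ v ∧ G.degree w ≠ 1)).card / 2)
    (hAvsub : Av ⊆ (G.neighborFinset v).filter (fun w => w ≠ u ∧ G.degree w ≠ 1))
    (hAvcard : Av.card =
      ((G.neighborFinset v).filter (fun w => w ≠ u ∧ G.degree w ≠ 1)).card / 2)
    (b : Bool) : IsValidProfile G (prof G u v p (Au ∪ Av) b) := by
  set n'u := (G.neighborFinset u).filter (fun w => w ≠ v ∧ G.degree w ≠ 1) with hn'u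
  set n'v := (G.neighborFinset v).filter (fun w => w ≠ u ∧ G.degree w ≠ 1) with hn'v
  set f := prof G u v p (Au ∪ Av) b with hf
  have hfS : ∀ x, Scond G u v x → f x = b := fun x h => prof_of_S h
  have hfu : f u = b := hfS u (Or.inl rfl)
  have hfv : f v = b := hfS v (Or.inr (Or.inl rfl))
  -- values at non-leaf neighbors of u (other than v)
  have hnbru : ∀ w, G.Adj u w → w ≠ v → G.degree w ≠ 1 → f w = decide (w ∈ Au) := by
    intro w hadj hwv hdeg
    have hnS : ¬ Scond G u v w := by
      rintro (rfl | rfl | ⟨h1, _⟩)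
      · exact hadj.ne rfl
      · exact hwv rfl
      · exact hdeg h1
    rw [hf, prof_of_not_S hnS, branch_seed_u huniq hadj hwv]
    have hnotv : w ∉ Av := by
      intro hmem
      have := hAvsub hmem
      rw [hn'v, Finset.mem_filter, SimpleGraph.mem_neighborFinset] at this
      exact no_triangle htree huv this.1 hadj
    simp [Finset.mem_union, hnotv]
  have hnbrv : ∀ w, G.Adj v w → w ≠ u → G.degree w ≠ 1 → f w = decide (w ∈ Av) := by
    intro w hadj hwu hdeg
    have hnS : ¬ Scond G u v w := by
      rintro (rfl | rfl | ⟨h1, _⟩)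
      · exact hwu rfl
      · exact hadj.ne rfl
      · exact hdeg h1
    rw [hf, prof_of_not_S hnS, branch_seed_v huniq huv hadj hwu]
    have hnotu : w ∉ Au := by
      intro hmem
      have := hAusub hmem
      rw [hn'u, Finset.mem_filter, SimpleGraph.mem_neighborFinset] at this
      exact no_triangle htree this.1 hadj.symm huv
    simp [Finset.mem_union, hnotu]
  have hcardn'u : n'u.card ≤ G.degree u - 1 := by
    have hsub : n'u ⊆ (G.neighborFinset u).erase v := by
      intro w hw
      rw [hn'u, Finset.mem_filter] at hw
      exact Finset.mem_erase.mpr ⟨hw.2.1, hw.1⟩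
    have := Finset.card_le_card hsub
    rwa [Finset.card_erase_of_mem ((SimpleGraph.mem_neighborFinset _ _ _).mpr huv)] at this
  have hcardn'v : n'v.card ≤ G.degree v - 1 := by
    have hsub : n'v ⊆ (G.neighborFinset v).erase u := by
      intro w hw
      rw [hn'v, Finset.mem_filter] at hw
      exact Finset.mem_erase.mpr ⟨hw.2.1, hw.1⟩
    have := Finset.card_le_card hsub
    rwa [Finset.card_erase_of_mem ((SimpleGraph.mem_neighborFinset _ _ _).mpr huv.symm)] at this
  have hdupos : 1 ≤ G.degree u :=
    Finset.card_pos.mpr ⟨v, (SimpleGraph.mem_neighborFinset _ _ _).mpr huv⟩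
  have hdvpos : 1 ≤ G.degree v :=
    Finset.card_pos.mpr ⟨u, (SimpleGraph.mem_neighborFinset _ _ _).mpr huv.symm⟩
  intro x
  apply half_le
  by_cases hxu : x = u
  · rw [hxu]
    simp only [hfu]
    cases b with
    | false =>
      have hsub : (G.neighborFinset u).filter (fun y => f y ≠ false) ⊆ Au := by
        intro y hy
        rw [Finset.mem_filter] at hy
        obtain ⟨hyN, hyne⟩ := hy
        have hadj : G.Adj u y := (SimpleGraph.mem_neighborFinset _ _ _).mp hyN
        have hyv : y ≠ v := by rintro rfl; exact hyne hfv
        have hdeg : G.degree y ≠ 1 := by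
          intro hd
          exact hyne (hfS y (Or.inr (Or.inr ⟨hd, Or.inl hadj⟩)))
        have hval := hnbru y hadj hyv hdeg
        by_contra hnotA
        apply hyne
        rw [hval]
        simp [hnotA]
      have h1 := Finset.card_le_card hsub
      rw [hAucard] at h1
      omega
    | true =>
      have hsub : (G.neighborFinset u).filter (fun y => f y ≠ true) ⊆ n'u \ Au := by
        intro y hy
        rw [Finset.mem_filter] at hy
        obtain ⟨hyN, hyne⟩ := hy
        have hadj : G.Adj u y := (SimpleGraph.mem_neighborFinset _ _ _).mp hyN
        have hyv : y ≠ v := by rintro rfl; exact hyne hfv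
        have hdeg : G.degree y ≠ 1 := by
          intro hd
          exact hyne (hfS y (Or.inr (Or.inr ⟨hd, Or.inl hadj⟩)))
        have hval := hnbru y hadj hyv hdeg
        have hnotA : y ∉ Au := by
          intro hA
          apply hyne
          rw [hval]
          simp [hA]
        refine Finset.mem_sdiff.mpr ⟨?_, hnotA⟩
        rw [hn'u, Finset.mem_filter]
        exact ⟨hyN, hyv, hdeg⟩
      have h1 := Finset.card_le_card hsub
      rw [Finset.card_sdiff_of_subset hAusub, hAucard] at h1
      omega
  · by_cases hxv : x = v
    · rw [hxv]
      simp only [hfv]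
      cases b with
      | false =>
        have hsub : (G.neighborFinset v).filter (fun y => f y ≠ false) ⊆ Av := by
          intro y hy
          rw [Finset.mem_filter] at hy
          obtain ⟨hyN, hyne⟩ := hy
          have hadj : G.Adj v y := (SimpleGraph.mem_neighborFinset _ _ _).mp hyN
          have hyu : y ≠ u := by rintro rfl; exact hyne hfu
          have hdeg : G.degree y ≠ 1 := by
            intro hd
            exact hyne (hfS y (Or.inr (Or.inr ⟨hd, Or.inr hadj⟩)))
          have hval := hnbrv y hadj hyu hdeg
          by_contra hnotA
          apply hyne
          rw [hval]
          simp [hnotA]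
        have h1 := Finset.card_le_card hsub
        rw [hAvcard] at h1
        omega
      | true =>
        have hsub : (G.neighborFinset v).filter (fun y => f y ≠ true) ⊆ n'v \ Av := by
          intro y hy
          rw [Finset.mem_filter] at hy
          obtain ⟨hyN, hyne⟩ := hy
          have hadj : G.Adj v y := (SimpleGraph.mem_neighborFinset _ _ _).mp hyN
          have hyu : y ≠ u := by rintro rfl; exact hyne hfu
          have hdeg : G.degree y ≠ 1 := by
            intro hd
            exact hyne (hfS y (Or.inr (Or.inr ⟨hd, Or.inr hadj⟩)))
          have hval := hnbrv y hadj hyu hdeg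
          have hnotA : y ∉ Av := by
            intro hA
            apply hyne
            rw [hval]
            simp [hA]
          refine Finset.mem_sdiff.mpr ⟨?_, hnotA⟩
          rw [hn'v, Finset.mem_filter]
          exact ⟨hyN, hyu, hdeg⟩
        have h1 := Finset.card_le_card hsub
        rw [Finset.card_sdiff_of_subset hAvsub, hAvcard] at h1
        omega
    · by_cases hxS : Scond G u v x
      · -- x is a leaf neighbor of u or v
        obtain ⟨hdeg1, hadj'⟩ : G.degree x = 1 ∧ (G.Adj u x ∨ G.Adj v x) := by
          rcases hxS with rfl | rfl | h
          · exact absurd rfl hxu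
          · exact absurd rfl hxv
          · exact h
        have hall : ∀ y ∈ G.neighborFinset x, f y = f x := by
          intro y hyN
          have hcard1 : (G.neighborFinset x).card ≤ 1 := le_of_eq hdeg1
          rcases hadj' with h | h
          · have hyu : y = u := Finset.card_le_one.mp hcard1 y hyN u
              ((SimpleGraph.mem_neighborFinset _ _ _).mpr h.symm)
            rw [hyu, hfu, hfS x hxS]
          · have hyv : y = v := Finset.card_le_one.mp hcard1 y hyN v
              ((SimpleGraph.mem_neighborFinset _ _ _).mpr h.symm)
            rw [hyv, hfv, hfS x hxS]
        have hempty : (G.neighborFinset x).filter (fun y => f y ≠ f x) = ∅ :=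
          Finset.filter_eq_empty_iff.mpr fun y hy => not_not_intro (hall y hy)
        rw [hempty]
        simp
      · -- generic x: all neighbors other than u, v have the same value
        have hfx : f x = decide (branch v p x ∈ Au ∪ Av) := prof_of_not_S hxS
        have hsame : ∀ y ∈ G.neighborFinset x, y ≠ u → y ≠ v → f y = f x := by
          intro y hyN hyu hyv
          have hadjxy : G.Adj x y := (SimpleGraph.mem_neighborFinset _ _ _).mp hyN
          have hySnot : ¬ Scond G u v y := by
            rintro (rfl | rfl | ⟨hd1, hadj'⟩)
            · exact hyu rfl
            · exact hyv rfl
            · have hcard1 : (G.neighborFinset y).card ≤ 1 := le_of_eq hd1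
              have hxmem : x ∈ G.neighborFinset y :=
                (SimpleGraph.mem_neighborFinset _ _ _).mpr hadjxy.symm
              rcases hadj' with h | h
              · exact hxu (Finset.card_le_one.mp hcard1 x hxmem u
                  ((SimpleGraph.mem_neighborFinset _ _ _).mpr h.symm))
              · exact hxv (Finset.card_le_one.mp hcard1 x hxmem v
                  ((SimpleGraph.mem_neighborFinset _ _ _).mpr h.symm))
          rw [hfx]
          exact (prof_of_not_S hySnot).trans
            (by rw [← branch_adj htree hp hadjxy hxu hxv hyu hyv])
        by_cases hadju : G.Adj x u
        · by_cases hadjv : G.Adj x v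
          · exact (no_triangle htree hadju huv hadjv).elim
          · have hsub : (G.neighborFinset x).filter (fun y => f y ≠ f x) ⊆ {u} := by
              intro y hy
              rw [Finset.mem_filter] at hy
              obtain ⟨hyN, hyne⟩ := hy
              rw [Finset.mem_singleton]
              by_contra hyu
              have hyv : y ≠ v := by
                rintro rfl
                exact hadjv ((SimpleGraph.mem_neighborFinset _ _ _).mp hyN)
              exact hyne (hsame y hyN hyu hyv)
            have h1 := Finset.card_le_card hsub
            rw [Finset.card_singleton] at h1
            have hdx1 : G.degree x ≠ 1 := by
              intro h
              exact hxS (Or.inr (Or.inr ⟨h, Or.inl hadju.symm⟩))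
            have hdxpos : 1 ≤ G.degree x :=
              Finset.card_pos.mpr ⟨u, (SimpleGraph.mem_neighborFinset _ _ _).mpr hadju⟩
            omega
        · by_cases hadjv : G.Adj x v
          · have hsub : (G.neighborFinset x).filter (fun y => f y ≠ f x) ⊆ {v} := by
              intro y hy
              rw [Finset.mem_filter] at hy
              obtain ⟨hyN, hyne⟩ := hy
              rw [Finset.mem_singleton]
              by_contra hyv
              have hyu : y ≠ u := by
                rintro rfl
                exact hadju ((SimpleGraph.mem_neighborFinset _ _ _).mp hyN)
              exact hyne (hsame y hyN hyu hyv)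
            have h1 := Finset.card_le_card hsub
            rw [Finset.card_singleton] at h1
            have hdx1 : G.degree x ≠ 1 := by
              intro h
              exact hxS (Or.inr (Or.inr ⟨h, Or.inr hadjv.symm⟩))
            have hdxpos : 1 ≤ G.degree x :=
              Finset.card_pos.mpr ⟨v, (SimpleGraph.mem_neighborFinset _ _ _).mpr hadjv⟩
            omega
          · have hempty : (G.neighborFinset x).filter (fun y => f y ≠ f x) = ∅ := by
              apply Finset.filter_eq_empty_iff.mpr
              intro y hyN
              have hyu : y ≠ u := by
                rintro rfl
                exact hadju ((SimpleGraph.mem_neighborFinset _ _ _).mp hyN)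
              have hyv : y ≠ v := by
                rintro rfl
                exact hadjv ((SimpleGraph.mem_neighborFinset _ _ _).mp hyN)
              exact not_not_intro (hsame y hyN hyu hyv)
            rw [hempty]
            simp

end IDSAux

/-- in an odd-degree tree, every IDS containing no leaf is a vertex
cover. -/
theorem ids_without_leaf_is_vertexCover {V : Type*} [Fintype V]
    (G : SimpleGraph V) (htree : G.IsTree) (hodd : ∀ v : V, Odd (G.degree v))
    (D : Set V) (hD : IsIDS G D) (hleaf : ∀ v ∈ D, G.degree v ≠ 1) :
    IsVertexCover G D := by
  intro u v huv
  by_contra hcon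
  push_neg at hcon
  obtain ⟨hu, hv⟩ := hcon
  have hex := htree.existsUnique_path
  set p : ∀ x : V, G.Walk u x := fun x => (hex u x).choose with hpdef
  have hp : ∀ x, (p x).IsPath := fun x => (hex u x).choose_spec.1
  have huniq : ∀ x (q : G.Walk u x), q.IsPath → p x = q :=
    fun x q hq => ((hex u x).choose_spec.2 q hq).symm
  obtain ⟨Au, hAusub, hAucard⟩ := Finset.exists_subset_card_eq
    (Nat.div_le_self ((G.neighborFinset u).filter (fun w => w ≠ v ∧ G.degree w ≠ 1)).card 2)
  obtain ⟨Av, hAvsub, hAvcard⟩ := Finset.exists_subset_card_eq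
    (Nat.div_le_self ((G.neighborFinset v).filter (fun w => w ≠ u ∧ G.degree w ≠ 1)).card 2)
  have hμ := IDSAux.prof_valid htree huv p hp huniq hAusub hAucard hAvsub hAvcard false
  have hν := IDSAux.prof_valid htree huv p hp huniq hAusub hAucard hAvsub hAvcard true
  have hagree : ∀ w ∈ D, IDSAux.prof G u v p (Au ∪ Av) false w =
      IDSAux.prof G u v p (Au ∪ Av) true w := by
    intro w hw
    have hnS : ¬ IDSAux.Scond G u v w := by
      rintro (rfl | rfl | ⟨h1, _⟩)
      · exact hu hw
      · exact hv hw
      · exact hleaf w hw h1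
    rw [IDSAux.prof_of_not_S hnS, IDSAux.prof_of_not_S hnS]
  have heq := hD _ _ hμ hν hagree
  have h2 := congrFun heq u
  rw [IDSAux.prof_of_S (Or.inl rfl), IDSAux.prof_of_S (Or.inl rfl)] at h2
  exact absurd h2 (by decide)
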